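/- For every natural number k ≥ 1 and every real x > 0 with 2k ≤ x, the upper incomplete gamma integral satisfies x^k e^{−x} ≤ ∫_x^∞ t^k e^{−t} dt ≤ (1 + 2k/x) · x^k e^{−x}. -/

import Mathlib

open MeasureTheory Set Real

private lemma aux_exp_integral (a c : ℝ) (hc : 0 < c) :
    ∫ t in Set.Ioi a, Real.exp (-(c * (t - a))) = 1 / c := by
  have key := integral_Ioi_of_hasDerivAt_of_tendsto' (m := 0)
    (f := fun t => -Real.exp (-(c * (t - a))) / c)
    (f' := fun t => Real.exp (-(c * (t - a)))) (a := a) ?_ ?_ ?_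
  · rw [key]; simp; ring
  · intro t _
    have h1 : HasDerivAt (fun t : ℝ => -(c * (t - a))) (-c) t := by
      have : HasDerivAt (fun t : ℝ => t - a) 1 t := (hasDerivAt_id t).sub_const a
      exact (this.const_mul c).neg.congr_deriv (by ring)
    have h3 := (h1.exp.neg.div_const c)
    refine h3.congr_deriv ?_
    field_simp
  · have heq : (fun t => Real.exp (-(c * (t - a)))) =
        fun t => Real.exp (c * a) * Real.exp (-c * t) := by
      funext t
      rw [show -(c * (t - a)) = c * a + -c * t by ring, Real.exp_add]
    rw [heq]
    exact (exp_neg_integrableOn_Ioi a hc).const_mul _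
  · have h : Filter.Tendsto (fun t : ℝ => -(c * (t - a))) Filter.atTop Filter.atBot := by
      apply Filter.tendsto_neg_atBot_iff.mpr
      exact (Filter.tendsto_atTop_add_const_right _ (-a) Filter.tendsto_id).const_mul_atTop hc
    have := (Real.tendsto_exp_atBot.comp h).neg.div_const c
    simpa using this

/-- Two-sided bound on the upper incomplete gamma integral: for `k ≥ 1`
and `x > 0` with `2k ≤ x`, `x^k e^{−x} ≤ ∫_x^∞ t^k e^{−t} dt ≤ (1 + 2k/x) x^k e^{−x}`. -/
theorem stmt_13 (k : ℕ) (hk : 1 ≤ k) (x : ℝ) (hx : 0 < x) (hkx : (2 * k : ℝ) ≤ x) :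
    x ^ k * Real.exp (-x) ≤ (∫ t in Set.Ioi x, t ^ k * Real.exp (-t)) ∧
    (∫ t in Set.Ioi x, t ^ k * Real.exp (-t)) ≤
      (1 + 2 * (k : ℝ) / x) * (x ^ k * Real.exp (-x)) := by
  have hk1 : (1 : ℝ) ≤ k := by exact_mod_cast hk
  have hkpos : (0 : ℝ) < k := by linarith
  set c : ℝ := (x - k) / x with hc_def
  have hxk : (k : ℝ) < x := by linarith
  have hc : 0 < c := div_pos (by linarith) hx
  have hpt : ∀ t ∈ Set.Ici x, t ^ k * Real.exp (-t) ≤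
      x ^ k * Real.exp (-x) * Real.exp (-(c * (t - x))) := by
    intro t ht
    have htx : x ≤ t := ht
    have ht0 : 0 < t := lt_of_lt_of_le hx htx
    have hlog : Real.log t - Real.log x ≤ (t - x) / x := by
      have h1 : Real.log (t / x) ≤ t / x - 1 :=
        Real.log_le_sub_one_of_pos (div_pos ht0 hx)
      rw [Real.log_div (ne_of_gt ht0) (ne_of_gt hx)] at h1
      have h2 : t / x - 1 = (t - x) / x := by field_simp
      linarith [h2 ▸ h1]
    have key : (k : ℝ) * Real.log t + (-t) ≤
        (k : ℝ) * Real.log x + (-x) + (-(c * (t - x))) := by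
      have h2 : (k : ℝ) * (Real.log t - Real.log x) ≤ (k : ℝ) * ((t - x) / x) :=
        mul_le_mul_of_nonneg_left hlog (le_of_lt hkpos)
      have h3 : -(c * (t - x)) = -(t - x) + (k / x) * (t - x) := by
        rw [hc_def]; field_simp; ring
      rw [h3]
      have h4 : (k : ℝ) * ((t - x) / x) = (k / x) * (t - x) := by ring
      nlinarith [h2]
    have hexp := Real.exp_le_exp.mpr key
    rw [Real.exp_add, Real.exp_add, Real.exp_add] at hexp
    have e1 : Real.exp ((k : ℝ) * Real.log t) = t ^ k := by
      rw [← Real.log_pow, Real.exp_log (pow_pos ht0 k)]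
    have e2 : Real.exp ((k : ℝ) * Real.log x) = x ^ k := by
      rw [← Real.log_pow, Real.exp_log (pow_pos hx k)]
    rw [e1, e2] at hexp
    linarith [hexp]
  have hmaj_int : IntegrableOn (fun t => x ^ k * Real.exp (-x) * Real.exp (-(c * (t - x))))
      (Set.Ioi x) := by
    have heq : (fun t => x ^ k * Real.exp (-x) * Real.exp (-(c * (t - x)))) =
        fun t => (x ^ k * Real.exp (-x) * Real.exp (c * x)) * Real.exp (-c * t) := by
      funext t
      rw [show -(c * (t - x)) = c * x + -c * t by ring, Real.exp_add]
      ring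
    rw [heq]
    exact (exp_neg_integrableOn_Ioi x hc).const_mul _
  have hf_int : IntegrableOn (fun t => t ^ k * Real.exp (-t)) (Set.Ioi x) := by
    apply hmaj_int.mono' ((continuous_pow k).mul (Real.continuous_exp.comp
      continuous_neg)).aestronglyMeasurable.restrict
    filter_upwards [ae_restrict_mem measurableSet_Ioi] with t ht
    simp only [Pi.mul_apply, Function.comp_apply]
    have h1 := hpt t (le_of_lt (mem_Ioi.mp ht))
    have h2 : 0 ≤ t ^ k * Real.exp (-t) :=
      mul_nonneg (pow_nonneg (le_of_lt (lt_of_lt_of_le hx (le_of_lt ht))) k)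
        (Real.exp_nonneg _)
    rw [Real.norm_eq_abs, abs_of_nonneg h2]
    exact h1
  constructor
  · have hlow : IntegrableOn (fun t => x ^ k * Real.exp (-t)) (Set.Ioi x) := by
      simpa [IntegrableOn] using (exp_neg_integrableOn_Ioi x one_pos).const_mul (x ^ k)
    have hmono : ∫ t in Set.Ioi x, x ^ k * Real.exp (-t) ≤
        ∫ t in Set.Ioi x, t ^ k * Real.exp (-t) := by
      apply setIntegral_mono_on hlow hf_int measurableSet_Ioi
      intro t ht
      exact mul_le_mul_of_nonneg_right (pow_le_pow_left₀ hx.le (le_of_lt ht) k)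
        (Real.exp_nonneg _)
    calc x ^ k * Real.exp (-x) = ∫ t in Set.Ioi x, x ^ k * Real.exp (-t) := by
          rw [MeasureTheory.integral_const_mul, integral_exp_neg_Ioi]
      _ ≤ _ := hmono
  · have hmono : (∫ t in Set.Ioi x, t ^ k * Real.exp (-t)) ≤
        ∫ t in Set.Ioi x, x ^ k * Real.exp (-x) * Real.exp (-(c * (t - x))) := by
      apply setIntegral_mono_on hf_int hmaj_int measurableSet_Ioi
      intro t ht
      exact hpt t (le_of_lt (mem_Ioi.mp ht))
    have hval : (∫ t in Set.Ioi x, x ^ k * Real.exp (-x) * Real.exp (-(c * (t - x)))) =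
        x ^ k * Real.exp (-x) * (1 / c) := by
      rw [MeasureTheory.integral_const_mul, aux_exp_integral x c hc]
    have hfin : x ^ k * Real.exp (-x) * (1 / c) ≤
        (1 + 2 * (k : ℝ) / x) * (x ^ k * Real.exp (-x)) := by
      have hnn : 0 ≤ x ^ k * Real.exp (-x) :=
        mul_nonneg (pow_nonneg (le_of_lt hx) k) (Real.exp_nonneg _)
      have hfrac : 1 / c ≤ 1 + 2 * (k : ℝ) / x := by
        rw [div_le_iff₀ hc, hc_def]
        have heq : (1 + 2 * (k : ℝ) / x) * ((x - k) / x) = (x + 2 * k) * (x - k) / (x * x) := by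
          field_simp
        rw [heq, le_div_iff₀ (by positivity)]
        nlinarith
      calc x ^ k * Real.exp (-x) * (1 / c)
          ≤ x ^ k * Real.exp (-x) * (1 + 2 * (k : ℝ) / x) :=
            mul_le_mul_of_nonneg_left hfrac hnn
        _ = (1 + 2 * (k : ℝ) / x) * (x ^ k * Real.exp (-x)) := by ring
    linarith [hval ▸ hmono]
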